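/- arXiv:2403.16918 — 3 statements merged into one kernel-verified Lean document; each statement's English description precedes it below -/
import Mathlib

section
/- Let L be a field of characteristic 0, V a finite-dimensional L-vector space, G a group, H a subgroup of G of finite index, and ρ : G → GL(V) a representation. Then ρ is semisimple if and only if the restriction ρ|_H is semisimple. -/
noncomputable instance repAsModuleAddCommGroup {k G V : Type*} [CommSemiring k] [Monoid G]
    [AddCommGroup V] [Module k V] (ρ : Representation k G V) :
    AddCommGroup ρ.asModule :=
  inferInstanceAs (AddCommGroup V)

namespace RepSS
variable {L G V : Type*} [Field L] [Group G] [AddCommGroup V] [Module L V]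
variable (ρ : Representation L G V)

/-- A subspace is invariant under (the elements of a subgroup acting through) `ρ`. -/
def Invt (H : Subgroup G) (p : Submodule L V) : Prop := ∀ g ∈ H, ∀ v ∈ p, ρ g v ∈ p

/-- Every `H`-invariant subspace has an `H`-invariant complement. -/
def SS (H : Subgroup G) : Prop :=
  ∀ p : Submodule L V, Invt ρ H p → ∃ q, Invt ρ H q ∧ IsCompl p q

lemma smul_def (a : MonoidAlgebra L G) (x : ρ.asModule) : a • x = ρ.asAlgebraHom a x := rfl

lemma algebraMap_smul_def (r : L) (x : ρ.asModule) :
    (algebraMap L (MonoidAlgebra L G) r) • x = (r • (x : V) : V) := by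
  rw [smul_def, AlgHom.commutes]; rfl

lemma of_smul_def (g : G) (x : ρ.asModule) : (MonoidAlgebra.of L G g) • x = ρ g x := by
  rw [smul_def, Representation.asAlgebraHom_of]

/-- An invariant subspace as a submodule over the monoid algebra. -/
def submoduleOfInvt (p : Submodule L V) (hp : ∀ g, ∀ v ∈ p, ρ g v ∈ p) :
    Submodule (MonoidAlgebra L G) ρ.asModule where
  carrier := show Set ρ.asModule from (p : Set V)
  add_mem' := fun h h' => p.add_mem h h'
  zero_mem' := p.zero_mem
  smul_mem' := by
    intro a v hv
    show a • v ∈ p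
    induction a using MonoidAlgebra.induction_on with
    | of g => rw [of_smul_def]; exact hp g v hv
    | add f g hf hg => rw [add_smul]; exact p.add_mem hf hg
    | smul r f hf =>
        have h1 : (r • f) • v = r • (f • v : V) := by
          rw [smul_def, smul_def, map_smul]; rfl
        rw [h1]; exact p.smul_mem r hf

/-- A monoid-algebra submodule as an invariant subspace. -/
def invtSubmodule (P : Submodule (MonoidAlgebra L G) ρ.asModule) : Submodule L V where
  carrier := show Set V from (P : Set ρ.asModule)
  add_mem' := fun h h' => P.add_mem h h'
  zero_mem' := P.zero_mem
  smul_mem' := by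
    intro r v hv
    have h1 := algebraMap_smul_def ρ r v
    exact h1 ▸ P.smul_mem _ hv

lemma mem_submoduleOfInvt {p : Submodule L V} {hp} {x : ρ.asModule} :
    x ∈ submoduleOfInvt ρ p hp ↔ x ∈ p := Iff.rfl

lemma mem_invtSubmodule {P : Submodule (MonoidAlgebra L G) ρ.asModule} {x : V} :
    x ∈ invtSubmodule ρ P ↔ x ∈ P := Iff.rfl

lemma isCompl_of_mem_iff {R S M : Type*} [Ring R] [Ring S] [AddCommGroup M] [Module R M]
    [Module S M] {p q : Submodule R M} {P Q : Submodule S M}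
    (hp : ∀ x : M, x ∈ P ↔ x ∈ p) (hq : ∀ x : M, x ∈ Q ↔ x ∈ q)
    (h : IsCompl p q) : IsCompl P Q := by
  rw [isCompl_iff] at h ⊢
  obtain ⟨h1, h2⟩ := h
  rw [Submodule.disjoint_def] at h1
  rw [codisjoint_iff, Submodule.eq_top_iff'] at h2
  constructor
  · rw [Submodule.disjoint_def]
    exact fun x hx hx' => h1 x ((hp x).1 hx) ((hq x).1 hx')
  · rw [codisjoint_iff, Submodule.eq_top_iff']
    intro x
    obtain ⟨y, hy, z, hz, hyz⟩ := Submodule.mem_sup.1 (h2 x)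
    exact Submodule.mem_sup.2 ⟨y, (hp y).2 hy, z, (hq z).2 hz, hyz⟩

lemma isSemisimple_iff_ss : IsSemisimpleModule (MonoidAlgebra L G) ρ.asModule ↔ SS ρ ⊤ := by
  constructor
  · intro hss p hp
    obtain ⟨Q, hQ⟩ := exists_isCompl (submoduleOfInvt ρ p (fun g => hp g trivial))
    refine ⟨invtSubmodule ρ Q, fun g _ v hv => ?_, ?_⟩
    · have h2 : (v : ρ.asModule) ∈ Q := (mem_invtSubmodule ρ).1 hv
      have h3 := Q.smul_mem (MonoidAlgebra.of L G g) h2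
      erw [of_smul_def] at h3
      exact (mem_invtSubmodule ρ).2 h3
    · exact isCompl_of_mem_iff (M := ρ.asModule) (R := MonoidAlgebra L G) (S := L) (fun x => (mem_submoduleOfInvt ρ).symm)
        (fun x => (mem_invtSubmodule ρ (x := x))) hQ
  · intro hss
    rw [isSemisimpleModule_iff]
    refine ⟨?_⟩
    intro P
    have hPinvt : ∀ g, ∀ v ∈ invtSubmodule ρ P, ρ g v ∈ invtSubmodule ρ P := by
      intro g v hv
      have h2 : (v : ρ.asModule) ∈ P := (mem_invtSubmodule ρ).1 hv
      have h3 := P.smul_mem (MonoidAlgebra.of L G g) h2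
      erw [of_smul_def] at h3
      exact (mem_invtSubmodule ρ).2 h3
    obtain ⟨q, hq, hcompl⟩ := hss (invtSubmodule ρ P) (fun g _ => hPinvt g)
    refine ⟨submoduleOfInvt ρ q (fun g => hq g trivial), ?_⟩
    exact isCompl_of_mem_iff (M := ρ.asModule) (R := L) (S := MonoidAlgebra L G) (fun x => (mem_invtSubmodule ρ (x := x)).symm)
      (fun x => (mem_submoduleOfInvt ρ)) hcompl


lemma rho_rho (g₁ g₂ : G) (v : V) : ρ g₁ (ρ g₂ v) = ρ (g₁ * g₂) v := by
  rw [map_mul]; rfl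

lemma rho_inv_rho (g : G) (v : V) : ρ g⁻¹ (ρ g v) = v := by
  rw [rho_rho, inv_mul_cancel, map_one]; rfl

lemma rho_rho_inv (g : G) (v : V) : ρ g (ρ g⁻¹ v) = v := by
  rw [rho_rho, mul_inv_cancel, map_one]; rfl

lemma ss_top_of_ss [CharZero L] (H : Subgroup G) [H.FiniteIndex] (hH : SS ρ H) : SS ρ ⊤ := by
  classical
  intro p hp
  obtain ⟨q, hq, hpq⟩ := hH p (fun g _ v hv => hp g trivial v hv)
  have : Fintype (G ⧸ H) := Fintype.ofFinite _
  -- the projection onto p along q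
  set e : V →ₗ[L] V := p.subtype ∘ₗ (p.projectionOnto q hpq) with he
  have he_mem : ∀ v, e v ∈ p := fun v => (p.projectionOnto q hpq v).2
  have he_left : ∀ v ∈ p, e v = v := by
    intro v hv
    have := Submodule.linearProjOfIsCompl_apply_left hpq ⟨v, hv⟩
    simp only [he, LinearMap.comp_apply]
    rw [this]; rfl
  have he_right : ∀ v ∈ q, e v = 0 := by
    intro v hv
    have := Submodule.linearProjOfIsCompl_apply_right hpq ⟨v, hv⟩
    simp only [he, LinearMap.comp_apply]
    rw [this]; rfl
  have he_comm : ∀ h ∈ H, ∀ v, e (ρ h v) = ρ h (e v) := by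
    intro h hh v
    have hv : v ∈ p ⊔ q := by rw [hpq.codisjoint.eq_top]; trivial
    obtain ⟨a, ha, b, hb, rfl⟩ := Submodule.mem_sup.1 hv
    rw [map_add, map_add, map_add, he_left a ha, he_right b hb,
      he_left _ (hp h trivial a ha), he_right _ (hq h hh b hb), add_zero, add_zero]
  -- the averaged projection
  set T : V →ₗ[L] V := ∑ c : G ⧸ H, (ρ (Quotient.out c)) ∘ₗ e ∘ₗ (ρ (Quotient.out c)⁻¹) with hT
  have hT_apply : ∀ v, T v = ∑ c : G ⧸ H, ρ (Quotient.out c) (e (ρ (Quotient.out c)⁻¹ v)) := by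
    intro v; rw [hT, LinearMap.sum_apply]; rfl
  have hT_mem : ∀ v, T v ∈ p := by
    intro v
    rw [hT_apply]
    exact Submodule.sum_mem _ fun c _ => hp _ trivial _ (he_mem _)
  have hT_left : ∀ v ∈ p, T v = (H.index : ℕ) • v := by
    intro v hv
    rw [hT_apply]
    rw [Finset.sum_congr rfl (fun c _ => ?_), Finset.sum_const, Finset.card_univ]
    · congr 1
      rw [Subgroup.index, Nat.card_eq_fintype_card]
    · rw [he_left _ (hp _ trivial v hv), rho_rho_inv]
  have hT_comm : ∀ g v, T (ρ g v) = ρ g (T v) := by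
    intro g v
    have key : ∀ c : G ⧸ H, ρ (Quotient.out (g • c)) (e (ρ (Quotient.out (g • c))⁻¹ (ρ g v)))
        = ρ g (ρ (Quotient.out c) (e (ρ (Quotient.out c)⁻¹ v))) := by
      intro c
      have h1 : ((g • Quotient.out c : G) : G ⧸ H) = ((Quotient.out (g • c) : G) : G ⧸ H) :=
        (MulAction.Quotient.mk_smul_out H g c).trans (QuotientGroup.out_eq' _).symm
      have h2 : (g • Quotient.out c : G)⁻¹ * Quotient.out (g • c) ∈ H := QuotientGroup.eq.1 h1
      have hst : (Quotient.out (g • c))⁻¹ * g * Quotient.out c ∈ H := by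
        have h3 := inv_mem h2
        rw [mul_inv_rev, inv_inv, smul_eq_mul] at h3
        rwa [mul_assoc]
      set s := Quotient.out (g • c) with hs
      set t := Quotient.out c with ht
      have hgt : s * (s⁻¹ * g * t) = g * t := by group
      have hsg : s⁻¹ * g = (s⁻¹ * g * t) * t⁻¹ := by group
      calc ρ s (e (ρ s⁻¹ (ρ g v)))
          = ρ s (e (ρ ((s⁻¹ * g * t) * t⁻¹) v)) := by rw [rho_rho, ← hsg]
        _ = ρ s (e (ρ (s⁻¹ * g * t) (ρ t⁻¹ v))) := by rw [rho_rho]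
        _ = ρ s (ρ (s⁻¹ * g * t) (e (ρ t⁻¹ v))) := by rw [he_comm _ hst]
        _ = ρ (g * t) (e (ρ t⁻¹ v)) := by rw [rho_rho ρ s, hgt]
        _ = ρ g (ρ t (e (ρ t⁻¹ v))) := by rw [rho_rho]
    rw [hT_apply, hT_apply, map_sum]
    exact (Fintype.sum_bijective (fun c => g • c) (MulAction.bijective g) _ _
      (fun c => (key c).symm)).symm
  -- normalize
  have hn : (H.index : L) ≠ 0 := Nat.cast_ne_zero.2 Subgroup.FiniteIndex.index_ne_zero
  set π : V →ₗ[L] V := (H.index : L)⁻¹ • T with hπ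
  have hπ_mem : ∀ v, π v ∈ p := fun v => p.smul_mem _ (hT_mem v)
  have hπ_left : ∀ v ∈ p, π v = v := by
    intro v hv
    rw [hπ, LinearMap.smul_apply, hT_left v hv, ← Nat.cast_smul_eq_nsmul L, smul_smul,
      inv_mul_cancel₀ hn, one_smul]
  have hπ_comm : ∀ g v, π (ρ g v) = ρ g (π v) := by
    intro g v
    rw [hπ, LinearMap.smul_apply, LinearMap.smul_apply, hT_comm, map_smul]
  set f : V →ₗ[L] p := π.codRestrict p hπ_mem with hf
  refine ⟨LinearMap.ker f, ?_, ?_⟩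
  · intro g _ v hv
    rw [LinearMap.mem_ker] at hv ⊢
    have h0 : π v = 0 := congrArg Subtype.val hv
    ext
    rw [LinearMap.codRestrict_apply, hπ_comm, h0, map_zero]; rfl
  · refine LinearMap.isCompl_of_proj ?_
    intro x
    ext
    rw [LinearMap.codRestrict_apply]
    exact hπ_left x x.2


/-- Minimal nonzero invariant subspaces. -/
def Min (N : Subgroup G) (m : Submodule L V) : Prop :=
  Invt ρ N m ∧ m ≠ ⊥ ∧ ∀ m' ≤ m, Invt ρ N m' → m' ≠ ⊥ → m' = m

lemma invt_bot (N : Subgroup G) : Invt ρ N ⊥ := by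
  intro g _ v hv
  rw [Submodule.mem_bot] at hv ⊢
  rw [hv, map_zero]

lemma invt_sup {N : Subgroup G} {p q : Submodule L V} (hp : Invt ρ N p) (hq : Invt ρ N q) :
    Invt ρ N (p ⊔ q) := by
  intro g hg v hv
  obtain ⟨a, ha, b, hb, rfl⟩ := Submodule.mem_sup.1 hv
  rw [map_add]
  exact Submodule.add_mem_sup (hp g hg a ha) (hq g hg b hb)

lemma invt_inf {N : Subgroup G} {p q : Submodule L V} (hp : Invt ρ N p) (hq : Invt ρ N q) :
    Invt ρ N (p ⊓ q) :=
  fun g hg v hv => ⟨hp g hg v hv.1, hq g hg v hv.2⟩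

lemma exists_min [FiniteDimensional L V] (N : Subgroup G) :
    ∀ (n : ℕ) (p : Submodule L V), Module.finrank L p = n → Invt ρ N p → p ≠ ⊥ →
      ∃ m ≤ p, Min ρ N m := by
  intro n
  induction n using Nat.strong_induction_on with
  | _ n ih =>
    intro p hrank hp hne
    by_cases hmin : ∀ m' ≤ p, Invt ρ N m' → m' ≠ ⊥ → m' = p
    · exact ⟨p, le_rfl, hp, hne, hmin⟩
    · push_neg at hmin
      obtain ⟨m', hle, hinv, hnebot, hneq⟩ := hmin
      obtain ⟨m, hm, hmmin⟩ := ih (Module.finrank L m')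
        (hrank ▸ Submodule.finrank_lt_finrank_of_lt (lt_of_le_of_ne hle hneq)) m' rfl hinv hnebot
      exact ⟨m, hm.trans hle, hmmin⟩

lemma map_map_inv (g : G) (m : Submodule L V) : (m.map (ρ g)).map (ρ g⁻¹) = m := by
  rw [← Submodule.map_comp]
  have h1 : (ρ g⁻¹) ∘ₗ (ρ g) = LinearMap.id := by
    rw [← Module.End.mul_eq_comp, ← map_mul, inv_mul_cancel, map_one]; rfl
  rw [h1, Submodule.map_id]

lemma map_inv_map (g : G) (m : Submodule L V) : (m.map (ρ g⁻¹)).map (ρ g) = m := by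
  have := map_map_inv ρ g⁻¹ m
  rwa [inv_inv] at this

lemma invt_map {N : Subgroup G} [hN : N.Normal] (g : G) {m : Submodule L V}
    (hm : Invt ρ N m) : Invt ρ N (m.map (ρ g)) := by
  intro n hn v hv
  obtain ⟨w, hw, rfl⟩ := hv
  rw [rho_rho]
  have hconj : g⁻¹ * n * g ∈ N := by
    have := hN.conj_mem n hn g⁻¹
    rwa [inv_inv] at this
  have h1 : n * g = g * (g⁻¹ * n * g) := by group
  rw [h1, ← rho_rho]
  exact Submodule.mem_map_of_mem (hm _ hconj w hw)

lemma min_map {N : Subgroup G} [N.Normal] (g : G) {m : Submodule L V}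
    (hm : Min ρ N m) : Min ρ N (m.map (ρ g)) := by
  refine ⟨invt_map ρ g hm.1, ?_, ?_⟩
  · intro h
    apply hm.2.1
    rw [← map_map_inv ρ g m, h, Submodule.map_bot]
  · intro m' hle hinv hne
    have h1 : m'.map (ρ g⁻¹) ≤ m := by
      have := Submodule.map_mono (f := ρ g⁻¹) hle
      rwa [map_map_inv] at this
    have h2 : m'.map (ρ g⁻¹) ≠ ⊥ := by
      intro h
      apply hne
      rw [← map_inv_map ρ g m', h, Submodule.map_bot]
    have h3 := hm.2.2 _ h1 (invt_map ρ g⁻¹ hinv) h2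
    rw [← map_inv_map ρ g m', h3]

lemma ss_of_ss_top [FiniteDimensional L V] (N : Subgroup G) [hN : N.Normal]
    (h : SS ρ ⊤) : SS ρ N := by
  classical
  set S : Set (Submodule L V) := {m | Min ρ N m} with hS
  set T : Submodule L V := sSup S with hTdef
  have hT_invt : Invt ρ ⊤ T := by
    intro g _ v hv
    have hle : T ≤ Submodule.comap (ρ g) T := by
      apply sSup_le
      intro m hmS x hx
      have h2 : Submodule.map (ρ g) m ∈ S := min_map ρ g hmS
      exact le_sSup h2 (Submodule.mem_map_of_mem hx)
    exact hle hv
  have hT_top : T = ⊤ := by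
    obtain ⟨r, hr_invt, hr⟩ := h T hT_invt
    rcases eq_or_ne r ⊥ with h0 | h0
    · have h1 := hr.codisjoint
      rw [codisjoint_iff, h0, sup_bot_eq] at h1
      exact h1
    · exfalso
      obtain ⟨m, hmle, hmmin⟩ := exists_min ρ N (Module.finrank L r) r rfl
        (fun n hn => hr_invt n trivial) h0
      have h1 : m ≤ T ⊓ r := le_inf (le_sSup hmmin) hmle
      rw [hr.disjoint.eq_bot, le_bot_iff] at h1
      exact hmmin.2.1 h1
  intro p hp
  have hSne : {q : Submodule L V | Invt ρ N q ∧ Disjoint p q}.Nonempty :=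
    ⟨⊥, invt_bot ρ N, disjoint_bot_right⟩
  obtain ⟨q, ⟨hq_invt, hq_disj⟩, hq_max⟩ := wellFounded_gt.has_min _ hSne
  refine ⟨q, hq_invt, isCompl_iff.2 ⟨hq_disj, ?_⟩⟩
  rw [codisjoint_iff]
  by_contra hne
  obtain ⟨m, hmS, hm_nle⟩ : ∃ m ∈ S, ¬ m ≤ p ⊔ q := by
    by_contra h'
    push_neg at h'
    exact hne (top_le_iff.1 (hT_top ▸ sSup_le h'))
  have hsup_invt : Invt ρ N (p ⊔ q) := invt_sup ρ hp hq_invt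
  have hminf : m ⊓ (p ⊔ q) = ⊥ := by
    rcases eq_or_ne (m ⊓ (p ⊔ q)) ⊥ with h' | h'
    · exact h'
    · exfalso
      have h1 := hmS.2.2 _ inf_le_left (invt_inf ρ hmS.1 hsup_invt) h'
      exact hm_nle (h1 ▸ inf_le_right)
  have hdisj' : Disjoint p (q ⊔ m) := by
    rw [Submodule.disjoint_def]
    intro x hxp hx
    obtain ⟨y, hy, z, hz, rfl⟩ := Submodule.mem_sup.1 hx
    have hz' : z ∈ m ⊓ (p ⊔ q) := by
      refine ⟨hz, ?_⟩
      have : z = (y + z) - y := by abel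
      rw [this]
      exact Submodule.sub_mem _ (Submodule.mem_sup_left hxp) (Submodule.mem_sup_right hy)
    rw [hminf, Submodule.mem_bot] at hz'
    rw [hz', add_zero] at hxp ⊢
    exact Submodule.disjoint_def.1 hq_disj y hxp hy
  have hlt : q < q ⊔ m := by
    refine lt_of_le_of_ne le_sup_left (fun hcontra => ?_)
    exact hm_nle ((le_sup_right.trans hcontra.symm.le).trans le_sup_right)
  exact hq_max (q ⊔ m) ⟨invt_sup ρ hq_invt hmS.1, hdisj'⟩ hlt


lemma ss_iff_of_invt_iff {G₁ G₂ : Type*} [Group G₁] [Group G₂]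
    {ρ₁ : Representation L G₁ V} {ρ₂ : Representation L G₂ V}
    {H₁ : Subgroup G₁} {H₂ : Subgroup G₂}
    (h : ∀ p : Submodule L V, Invt ρ₁ H₁ p ↔ Invt ρ₂ H₂ p) : SS ρ₁ H₁ ↔ SS ρ₂ H₂ := by
  constructor
  · intro hs p hp
    obtain ⟨q, hq, hc⟩ := hs p ((h p).2 hp)
    exact ⟨q, (h q).1 hq, hc⟩
  · intro hs p hp
    obtain ⟨q, hq, hc⟩ := hs p ((h p).1 hp)
    exact ⟨q, (h q).2 hq, hc⟩

end RepSS

theorem semisimple_iff_semisimple_restrict_finiteIndex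
    (L : Type*) [Field L] [CharZero L]
    (V : Type*) [AddCommGroup V] [Module L V] [FiniteDimensional L V]
    (G : Type*) [Group G] (H : Subgroup G) [H.FiniteIndex]
    (ρ : Representation L G V) :
    IsSemisimpleModule (MonoidAlgebra L G) ρ.asModule ↔
      IsSemisimpleModule (MonoidAlgebra L ↥H)
        (Representation.asModule (MonoidHom.comp ρ H.subtype)) := by
  classical
  rw [RepSS.isSemisimple_iff_ss, RepSS.isSemisimple_iff_ss]
  set σ : Representation L ↥H V := MonoidHom.comp ρ H.subtype with hσ
  have hH : ∀ p : Submodule L V, RepSS.Invt σ ⊤ p ↔ RepSS.Invt ρ H p := by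
    intro p
    constructor
    · intro hp g hg v hv
      exact hp ⟨g, hg⟩ trivial v hv
    · intro hp g _ v hv
      exact hp (g : G) g.2 v hv
  have hN : ∀ p : Submodule L V,
      RepSS.Invt σ (H.normalCore.subgroupOf H) p ↔ RepSS.Invt ρ H.normalCore p := by
    intro p
    constructor
    · intro hp n hn v hv
      exact hp ⟨n, H.normalCore_le hn⟩ (Subgroup.mem_subgroupOf.2 hn) v hv
    · intro hp g hg v hv
      exact hp (g : G) (Subgroup.mem_subgroupOf.1 hg) v hv
  constructor
  · intro h
    have h1 : RepSS.SS ρ H.normalCore := RepSS.ss_of_ss_top ρ H.normalCore h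
    have h2 : RepSS.SS σ (H.normalCore.subgroupOf H) := (RepSS.ss_iff_of_invt_iff hN).2 h1
    exact RepSS.ss_top_of_ss σ (H.normalCore.subgroupOf H) h2
  · intro h
    have h1 : RepSS.SS ρ H := (RepSS.ss_iff_of_invt_iff hH).1 h
    exact RepSS.ss_top_of_ss ρ H h1
end

section
/- Let C be an algebraically closed field of characteristic 0, G a group, and ρ₁, ρ₂ : G → GLₙ(C) two semisimple finite-dimensional representations with equal character, i.e. trace ρ₁(g) = trace ρ₂(g) for all g ∈ G. Then ρ₁ and ρ₂ are isomorphic. -/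
open LinearMap Module Submodule

section BN

variable {k : Type*} [Field k] {A : Type*} [Ring A] [Algebra k A]
variable {M : Type*} [AddCommGroup M] [Module k M] [Module A M] [IsScalarTower k A M]

/-- The action of `a : A` as a `k`-linear endomorphism. -/
noncomputable def smulEnd (k : Type*) [Field k] {A : Type*} [Ring A] [Algebra k A]
    {M : Type*} [AddCommGroup M] [Module k M] [Module A M] [IsScalarTower k A M]
    (a : A) : M →ₗ[k] M where
  toFun m := a • m
  map_add' := smul_add a
  map_smul' c m := by
    simp only [RingHom.id_apply]
    rw [← algebraMap_smul A c m, ← mul_smul, ← Algebra.commutes, mul_smul, algebraMap_smul]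

@[simp] lemma smulEnd_apply (a : A) (m : M) : smulEnd k a m = a • m := rfl

/-- Finite powers of a semisimple module are semisimple. -/
lemma pi_isSemisimple (r : ℕ) [IsSemisimpleModule A M] :
    IsSemisimpleModule A (Fin r → M) := by
  refine isSemisimpleModule_of_isSemisimpleModule_submodule (s := Set.univ)
    (p := fun i : Fin r => LinearMap.range (LinearMap.single A (fun _ : Fin r => M) i))
    (fun i _ => ?_) ?_
  · exact IsSemisimpleModule.range _
  · rw [eq_top_iff]
    intro x _
    have : x = ∑ i, Pi.single i (x i) := (Finset.univ_sum_single x).symm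
    rw [this]
    refine Submodule.sum_mem _ fun i _ => ?_
    refine Submodule.mem_iSup_of_mem i ?_
    refine Submodule.mem_iSup_of_mem trivial ?_
    exact ⟨x i, rfl⟩

lemma prod_isSemisimple {N : Type*} [AddCommGroup N] [Module A N]
    [IsSemisimpleModule A M] [IsSemisimpleModule A N] :
    IsSemisimpleModule A (M × N) := by
  refine isSemisimpleModule_of_isSemisimpleModule_submodule (s := Set.univ)
    (p := fun b : Bool => if b then LinearMap.range (LinearMap.inl A M N)
      else LinearMap.range (LinearMap.inr A M N)) (fun b _ => ?_) ?_
  · cases b <;> exact IsSemisimpleModule.range _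
  · rw [eq_top_iff]
    rintro ⟨x, y⟩ _
    have : (x, y) = (x, 0) + (0, y) := by simp
    rw [this]
    refine Submodule.add_mem _ ?_ ?_
    · exact Submodule.mem_iSup_of_mem true (Submodule.mem_iSup_of_mem trivial (by simp))
    · exact Submodule.mem_iSup_of_mem false (Submodule.mem_iSup_of_mem trivial (by simp))


/-- Jacobson density (the consequence we need): a `k`-linear endomorphism of a
finite-dimensional semisimple `A`-module commuting with all `A`-endomorphisms is
given by the action of some element of `A`. -/
lemma density [IsSemisimpleModule A M] [FiniteDimensional k M]
    (f : M →ₗ[k] M) (hf : ∀ (g : M →ₗ[A] M) (m : M), f (g m) = g (f m)) :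
    ∃ a : A, ∀ m : M, f m = a • m := by
  obtain ⟨r, s, hs⟩ := Module.Finite.exists_fin (R := k) (M := M)
  have hss : IsSemisimpleModule A (Fin r → M) := by
    refine isSemisimpleModule_of_isSemisimpleModule_submodule (s := Set.univ)
      (p := fun i : Fin r => LinearMap.range (LinearMap.single A (fun _ : Fin r => M) i))
      (fun i _ => IsSemisimpleModule.range _) ?_
    rw [eq_top_iff]
    intro x _
    rw [← Finset.univ_sum_single x]
    exact Submodule.sum_mem _ fun i _ => Submodule.mem_iSup_of_mem i
      (Submodule.mem_iSup_of_mem trivial ⟨x i, rfl⟩)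
  -- the cyclic submodule generated by `s` in `Fin r → M`
  set P := Submodule.span A ({s} : Set (Fin r → M)) with hP
  obtain ⟨Q, hQ⟩ := exists_isCompl P
  set π : (Fin r → M) →ₗ[A] (Fin r → M) := P.subtype ∘ₗ P.linearProjOfIsCompl Q hQ with hπ
  have hπleft : ∀ v ∈ P, π v = v := fun v hv => by
    exact congrArg Subtype.val (Submodule.projectionOnto_apply_left hQ ⟨v, hv⟩)
  have hπmem : ∀ v, π v ∈ P := fun v => (P.linearProjOfIsCompl Q hQ v).2
  -- f applied coordinatewise
  set F : (Fin r → M) →ₗ[k] (Fin r → M) := LinearMap.pi (fun i => f ∘ₗ LinearMap.proj i) with hF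
  have hFapply : ∀ v i, F v i = f (v i) := fun v i => rfl
  have hcomm : ∀ v, F (π v) = π (F v) := by
    intro v
    have hv : v = ∑ j, Pi.single j (v j) := (Finset.univ_sum_single v).symm
    funext i
    rw [hFapply]
    conv_lhs => rw [hv]
    conv_rhs => rw [hv]
    rw [map_sum, map_sum, map_sum]
    simp only [Finset.sum_apply]
    rw [map_sum]
    refine Finset.sum_congr rfl fun j _ => ?_
    -- the (i,j) matrix coefficient of π is an A-endomorphism of M
    set g : M →ₗ[A] M :=
      (LinearMap.proj i) ∘ₗ π ∘ₗ (LinearMap.single A (fun _ : Fin r => M) j) with hg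
    have h1 : π (Pi.single j (v j)) i = g (v j) := rfl
    have h2 : π (Pi.single j (f (v j))) i = g (f (v j)) := rfl
    have h3 : F (Pi.single j (v j)) = Pi.single j (f (v j)) := by
      funext i'
      rw [hFapply]
      rcases eq_or_ne i' j with rfl | hne
      · simp
      · simp [Pi.single_eq_of_ne hne]
    rw [h1, h3, h2, hf g]
  have hsP : s ∈ P := Submodule.mem_span_singleton_self s
  have hFs : F s ∈ P := by
    have : F s = π (F s) := by rw [← hcomm s, hπleft s hsP]
    rw [this]; exact hπmem _
  obtain ⟨a, ha⟩ := Submodule.mem_span_singleton.mp hFs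
  refine ⟨a, fun m => ?_⟩
  have key : ∀ i, f (s i) = a • s i := by
    intro i
    have := congrFun ha i
    simp only [Pi.smul_apply] at this
    rw [← hFapply s i, ← this]
  -- extend by linearity
  have : f = smulEnd k a := by
    apply LinearMap.ext_on hs
    rintro x ⟨i, rfl⟩
    simpa using key i
  rw [this]; rfl

lemma simple_le_sSup_class [IsSemisimpleModule A M]
    (𝒞 : Submodule A M → Prop)
    (hiso : ∀ W W' : Submodule A M, (W ≃ₗ[A] W') → 𝒞 W → 𝒞 W')
    (T : Submodule A M) (hT : IsSimpleModule A T)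
    (hle : T ≤ sSup {W : Submodule A M | IsSimpleModule A W ∧ 𝒞 W}) : 𝒞 T := by
  haveI := hT
  obtain ⟨Cc, hCc⟩ := exists_isCompl T
  set π : M →ₗ[A] T := T.linearProjOfIsCompl Cc hCc with hπ
  have hexists : ∃ W : Submodule A M, (IsSimpleModule A W ∧ 𝒞 W) ∧ ¬(W ≤ LinearMap.ker π) := by
    by_contra h
    push_neg at h
    have h1 : T ≤ LinearMap.ker π :=
      hle.trans (sSup_le fun W hW => h W hW)
    haveI : Nontrivial T := IsSimpleModule.nontrivial A T
    obtain ⟨x, hx⟩ := exists_ne (0 : T)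
    have h2 : π (x : M) = x := Submodule.linearProjOfIsCompl_apply_left hCc x
    have h3 : π (x : M) = 0 := h1 x.2
    exact hx (by rw [← h2, h3])
  obtain ⟨W, ⟨hWsimple, hWC⟩, hWker⟩ := hexists
  haveI := hWsimple
  set ρ : W →ₗ[A] T := π ∘ₗ W.subtype with hρ
  have hrange : LinearMap.range ρ = ⊤ := by
    rcases eq_bot_or_eq_top (LinearMap.range ρ) with h | h
    · exfalso
      apply hWker
      intro x hx
      have h0 : ρ ⟨x, hx⟩ = 0 := by
        rw [LinearMap.range_eq_bot] at h
        rw [h]; rfl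
      have hx0 : π x = 0 := by
        have : π x = ρ ⟨x, hx⟩ := rfl
        rw [this, h0]
      exact hx0
    · exact h
  have hker : LinearMap.ker ρ = ⊥ := by
    rcases eq_bot_or_eq_top (LinearMap.ker ρ) with h | h
    · exact h
    · exfalso
      have : ρ = 0 := LinearMap.ker_eq_top.mp h
      rw [this, LinearMap.range_zero] at hrange
      exact bot_ne_top hrange
  have e : W ≃ₗ[A] T :=
    LinearEquiv.ofBijective ρ ⟨LinearMap.ker_eq_bot.mp hker, LinearMap.range_eq_top.mp hrange⟩
  exact hiso W T e hWC

lemma map_simple_class_le (𝒞 : Submodule A M → Prop)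
    (hiso : ∀ W W' : Submodule A M, (W ≃ₗ[A] W') → 𝒞 W → 𝒞 W') (g : M →ₗ[A] M) :
    Submodule.map g (sSup {W : Submodule A M | IsSimpleModule A W ∧ 𝒞 W})
      ≤ sSup {W : Submodule A M | IsSimpleModule A W ∧ 𝒞 W} := by
  rw [(Submodule.gc_map_comap g).l_sSup]
  refine iSup₂_le fun W hW => ?_
  rcases eq_or_ne (Submodule.map g W) ⊥ with h | h
  · exact h ▸ bot_le
  · haveI := hW.1
    have hrange : LinearMap.range (g ∘ₗ W.subtype) = Submodule.map g W := by
      rw [LinearMap.range_comp, Submodule.range_subtype]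
    have hker : LinearMap.ker (g ∘ₗ W.subtype) = ⊥ := by
      rcases eq_bot_or_eq_top (LinearMap.ker (g ∘ₗ W.subtype)) with h' | h'
      · exact h'
      · exact absurd (by rw [← hrange, LinearMap.ker_eq_top.mp h', LinearMap.range_zero]) h
    have e : W ≃ₗ[A] ↥(Submodule.map g W) :=
      (LinearEquiv.ofInjective _ (LinearMap.ker_eq_bot.mp hker)).trans
        (LinearEquiv.ofEq _ _ hrange)
    exact le_sSup ⟨IsSimpleModule.congr e.symm, hiso W _ e hW.2⟩

lemma exists_simple_le [IsSemisimpleModule A M] (D : Submodule A M) (hD : D ≠ ⊥) :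
    ∃ S : Submodule A M, IsSimpleModule A S ∧ S ≤ D := by
  haveI : Nontrivial D := Submodule.nontrivial_iff_ne_bot.mpr hD
  have htop : sSup {m : Submodule A D | IsSimpleModule A m} = ⊤ :=
    IsSemisimpleModule.sSup_simples_eq_top A D
  have hne : {m : Submodule A D | IsSimpleModule A m}.Nonempty := by
    by_contra h
    rw [Set.not_nonempty_iff_eq_empty] at h
    rw [h, sSup_empty] at htop
    exact bot_ne_top htop
  obtain ⟨S', hS'⟩ := hne
  haveI : IsSimpleModule A S' := hS'
  refine ⟨Submodule.map D.subtype S', ?_, Submodule.map_subtype_le D S'⟩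
  exact IsSimpleModule.congr
    (Submodule.equivMapOfInjective D.subtype (Submodule.injective_subtype D) S').symm

lemma submodule_le_sSup_class [IsSemisimpleModule A M] (𝒞 : Submodule A M → Prop)
    (P : Submodule A M)
    (h : ∀ W : Submodule A M, IsSimpleModule A W → W ≤ P → 𝒞 W) :
    P ≤ sSup {W : Submodule A M | IsSimpleModule A W ∧ 𝒞 W} := by
  have h1 : P = Submodule.map P.subtype
      (sSup {m : Submodule A P | IsSimpleModule A m}) := by
    rw [IsSemisimpleModule.sSup_simples_eq_top A P, Submodule.map_top,
      Submodule.range_subtype]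
  rw [h1, (Submodule.gc_map_comap P.subtype).l_sSup]
  refine iSup₂_le fun T' hT' => ?_
  haveI : IsSimpleModule A T' := hT'
  have hTsimple : IsSimpleModule A ↥(Submodule.map P.subtype T') :=
    IsSimpleModule.congr
      (Submodule.equivMapOfInjective P.subtype (Submodule.injective_subtype P) T').symm
  exact le_sSup ⟨hTsimple, h _ hTsimple (Submodule.map_subtype_le P T')⟩

lemma exists_iso_simple_submodule [CharZero k]
    {N : Type*} [AddCommGroup N] [Module k N] [Module A N] [IsScalarTower k A N]
    [IsSemisimpleModule A M] [IsSemisimpleModule A N]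
    [FiniteDimensional k M] [FiniteDimensional k N]
    (htr : ∀ a : A, LinearMap.trace k M (smulEnd k a) = LinearMap.trace k N (smulEnd k a))
    (S : Submodule A M) (hS : IsSimpleModule A S) :
    ∃ T : Submodule A N, IsSimpleModule A T ∧ Nonempty ((S : Type _) ≃ₗ[A] T) := by
  haveI := hS
  by_contra hno
  push_neg at hno
  haveI : IsSemisimpleModule A (M × N) := prod_isSemisimple
  set 𝒞 : Submodule A (M × N) → Prop := fun W => Nonempty ((W : Type _) ≃ₗ[A] S) with h𝒞
  have hiso : ∀ W W' : Submodule A (M × N), ((W : Type _) ≃ₗ[A] W') → 𝒞 W → 𝒞 W' :=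
    fun W W' e ⟨i⟩ => ⟨e.symm.trans i⟩
  have hiso' : ∀ W W' : Submodule A (M × N), ((W : Type _) ≃ₗ[A] W') → ¬𝒞 W → ¬𝒞 W' :=
    fun W W' e h h' => h (hiso W' W e.symm h')
  set Iso := sSup {W : Submodule A (M × N) | IsSimpleModule A W ∧ 𝒞 W} with hIso
  set Rest := sSup {W : Submodule A (M × N) | IsSimpleModule A W ∧ ¬𝒞 W} with hRest
  have hcodis : Iso ⊔ Rest = ⊤ := by
    rw [eq_top_iff, ← IsSemisimpleModule.sSup_simples_eq_top A (M × N)]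
    refine sSup_le fun W hW => ?_
    by_cases h : 𝒞 W
    · exact le_sup_of_le_left (le_sSup ⟨hW, h⟩)
    · exact le_sup_of_le_right (le_sSup ⟨hW, h⟩)
  have hdis : Disjoint Iso Rest := by
    rw [disjoint_iff]
    by_contra hne
    obtain ⟨T, hTs, hTle⟩ := exists_simple_le (Iso ⊓ Rest) hne
    exact simple_le_sSup_class _ hiso' T hTs (hTle.trans inf_le_right)
      (simple_le_sSup_class _ hiso T hTs (hTle.trans inf_le_left))
  have hcompl : IsCompl Iso Rest := ⟨hdis, codisjoint_iff.mpr hcodis⟩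
  set π : (M × N) →ₗ[A] (M × N) := Iso.subtype ∘ₗ Iso.linearProjOfIsCompl Rest hcompl with hπ
  have hπIso : ∀ u ∈ Iso, π u = u := fun u hu => by
    exact congrArg Subtype.val
      (Submodule.projectionOnto_apply_left hcompl ⟨u, hu⟩)
  have hπRest : ∀ u ∈ Rest, π u = 0 := fun u hu => by
    exact congrArg Subtype.val (Submodule.projectionOnto_apply_of_mem_right hcompl hu)
  have hπmem : ∀ u, π u ∈ Iso := fun u => (Iso.linearProjOfIsCompl Rest hcompl u).2
  have hg : ∀ (g : (M × N) →ₗ[A] (M × N)) (u : M × N), π (g u) = g (π u) := by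
    intro g u
    have hu : u ∈ Iso ⊔ Rest := hcodis.ge Submodule.mem_top
    obtain ⟨x, hx, y, hy, rfl⟩ := Submodule.mem_sup.mp hu
    have hgx : g x ∈ Iso :=
      map_simple_class_le _ hiso g (Submodule.mem_map_of_mem hx)
    have hgy : g y ∈ Rest :=
      map_simple_class_le _ hiso' g (Submodule.mem_map_of_mem hy)
    simp only [map_add, hπIso x hx, hπRest y hy, hπIso _ hgx, hπRest _ hgy, add_zero, map_zero]
  obtain ⟨a, ha⟩ := density (π.restrictScalars k) (fun g u => hg g u)
  -- `N` (as the second factor) lies in `Rest`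
  have hNRest : LinearMap.range (LinearMap.inr A M N) ≤ Rest := by
    refine submodule_le_sSup_class _ _ fun W hWs hWle => ?_
    rintro ⟨e⟩
    have hinj : Function.Injective (LinearMap.inr A M N) := LinearMap.inr_injective
    have hmap : Submodule.map (LinearMap.inr A M N)
        (Submodule.comap (LinearMap.inr A M N) W) = W :=
      Submodule.map_comap_eq_self hWle
    have e2 : (↥(Submodule.comap (LinearMap.inr A M N) W) : Type _) ≃ₗ[A] ↥W :=
      (Submodule.equivMapOfInjective _ hinj _).trans (LinearEquiv.ofEq _ _ hmap)
    exact (hno _ (IsSimpleModule.congr (e2.trans e))).false (e2.trans e).symm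
  -- the first copy of `S` lies in `Iso`
  have hSIso : Submodule.map (LinearMap.inl A M N) S ≤ Iso := by
    have e : (S : Type _) ≃ₗ[A] ↥(Submodule.map (LinearMap.inl A M N) S) :=
      Submodule.equivMapOfInjective _ LinearMap.inl_injective S
    exact le_sSup ⟨IsSimpleModule.congr e.symm, ⟨e.symm⟩⟩
  -- `a` kills `N`
  have haN : ∀ x : N, a • x = 0 := by
    intro x
    have h1 : π ((0 : M), x) = 0 := hπRest _ (hNRest ⟨x, rfl⟩)
    have h2 : ((0 : M), x) = (LinearMap.inr A M N) x := rfl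
    have := ha ((0 : M), x)
    simp only [LinearMap.restrictScalars_apply] at this
    rw [h1] at this
    have := congrArg Prod.snd this
    simpa using this.symm
  -- `a` fixes `S`
  have haS : ∀ x ∈ S, a • x = x := by
    intro x hx
    have hmem : ((x : M), (0 : N)) ∈ Submodule.map (LinearMap.inl A M N) S :=
      ⟨x, hx, rfl⟩
    have h1 : π (x, (0 : N)) = (x, 0) := hπIso _ (hSIso hmem)
    have := ha (x, (0 : N))
    simp only [LinearMap.restrictScalars_apply] at this
    rw [h1] at this
    have := congrArg Prod.fst this
    simpa using this.symm
  -- `a` acts idempotently on `M`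
  have haidem : ∀ m : M, a • (a • m) = a • m := by
    intro m
    have h1 := ha (m, (0 : N))
    simp only [LinearMap.restrictScalars_apply] at h1
    have h2 : π (π (m, (0 : N))) = π (m, (0 : N)) := hπIso _ (hπmem _)
    rw [h1] at h2
    have h3 := ha (a • (m, (0 : N)))
    simp only [LinearMap.restrictScalars_apply] at h3
    rw [h3] at h2
    have := congrArg Prod.fst h2
    simpa using this
  -- trace over `N` vanishes
  have htrN : LinearMap.trace k N (smulEnd k a) = 0 := by
    have : (smulEnd k a : N →ₗ[k] N) = 0 := LinearMap.ext fun x => haN x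
    rw [this, map_zero]
  -- trace over `M` is the (nonzero) rank of an idempotent
  have hproj : LinearMap.IsProj (LinearMap.range (smulEnd k (M := M) a)) (smulEnd k a) :=
    ⟨fun x => LinearMap.mem_range_self _ x, by rintro x ⟨y, rfl⟩; exact haidem y⟩
  have htrM : LinearMap.trace k M (smulEnd k a)
      = (Module.finrank k (LinearMap.range (smulEnd k (M := M) a)) : k) := hproj.trace
  haveI : Nontrivial S := IsSimpleModule.nontrivial A S
  obtain ⟨s, hs⟩ := exists_ne (0 : S)
  have hsmem : (s : M) ∈ LinearMap.range (smulEnd k (M := M) a) :=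
    ⟨(s : M), by simpa using haS (s : M) s.2⟩
  haveI : Nontrivial (LinearMap.range (smulEnd k (M := M) a)) := by
    refine ⟨⟨⟨(s : M), hsmem⟩, 0, ?_⟩⟩
    simp only [ne_eq, Submodule.mk_eq_zero]
    exact fun h => hs (Subtype.ext h)
  have hpos : 0 < Module.finrank k (LinearMap.range (smulEnd k (M := M) a)) :=
    Module.finrank_pos
  have := htr a
  rw [htrM, htrN] at this
  exact absurd this (by exact_mod_cast hpos.ne')

lemma trace_smulEnd_eq_of_equiv {N : Type*} [AddCommGroup N] [Module k N] [Module A N]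
    [IsScalarTower k A N] (e : M ≃ₗ[A] N) (a : A) :
    LinearMap.trace k M (smulEnd k a) = LinearMap.trace k N (smulEnd k a) := by
  have h : (e.restrictScalars k).conj (smulEnd k a) = smulEnd k (M := N) a := by
    ext x
    simp [LinearEquiv.conj_apply, map_smul]
  rw [← LinearMap.trace_conj' (smulEnd k (M := M) a) (e.restrictScalars k), h]

lemma trace_finrank_eq' {N : Type*} [AddCommGroup N] [Module k N] [Module A N]
    [IsScalarTower k A N] [CharZero k] [FiniteDimensional k M] [FiniteDimensional k N]
    (htr : ∀ a : A, LinearMap.trace k M (smulEnd k a) = LinearMap.trace k N (smulEnd k a)) :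
    Module.finrank k M = Module.finrank k N := by
  have h := htr 1
  have hM : smulEnd k (1 : A) = LinearMap.id (R := k) (M := M) := LinearMap.ext fun m => one_smul A m
  have hN : smulEnd k (1 : A) = LinearMap.id (R := k) (M := N) := LinearMap.ext fun m => one_smul A m
  rw [hM, hN, LinearMap.trace_id, LinearMap.trace_id] at h
  exact_mod_cast h

end BN

universe u v

theorem iso_of_trace_eq_aux {k : Type*} [Field k] [CharZero k] {A : Type*} [Ring A]
    [Algebra k A] :
    ∀ (n : ℕ) (M : Type u) (N : Type v) [AddCommGroup M] [AddCommGroup N]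
      [Module k M] [Module A M] [IsScalarTower k A M]
      [Module k N] [Module A N] [IsScalarTower k A N]
      [FiniteDimensional k M] [FiniteDimensional k N]
      [IsSemisimpleModule A M] [IsSemisimpleModule A N],
      (∀ a : A, LinearMap.trace k M (smulEnd k a) = LinearMap.trace k N (smulEnd k a)) →
      Module.finrank k M ≤ n → Nonempty (M ≃ₗ[A] N) := by
  intro n
  induction n with
  | zero =>
    intro M N _ _ _ _ _ _ _ _ _ _ _ _ htr hrank
    have h0 : Module.finrank k M = 0 := Nat.le_zero.mp hrank
    have h1 : Module.finrank k N = 0 := (trace_finrank_eq' htr).symm.trans h0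
    haveI : Subsingleton M := Module.finrank_zero_iff.mp h0
    haveI : Subsingleton N := Module.finrank_zero_iff.mp h1
    exact ⟨LinearEquiv.ofSubsingleton M N⟩
  | succ n ih =>
    intro M N _ _ _ _ _ _ _ _ _ _ _ _ htr hrank
    rcases eq_or_ne (Module.finrank k M) 0 with h0 | h0
    · have h1 : Module.finrank k N = 0 := (trace_finrank_eq' htr).symm.trans h0
      haveI : Subsingleton M := Module.finrank_zero_iff.mp h0
      haveI : Subsingleton N := Module.finrank_zero_iff.mp h1
      exact ⟨LinearEquiv.ofSubsingleton M N⟩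
    haveI : Nontrivial M := by
      rcases subsingleton_or_nontrivial M with h | h
      · exact absurd (Module.finrank_zero_iff.mpr h) h0
      · exact h
    obtain ⟨S₀, hS₀, -⟩ := exists_simple_le (A := A) (M := M) ⊤
      (by simpa using (Submodule.nontrivial_iff A).mpr ‹Nontrivial M›)
    haveI := hS₀
    haveI : FiniteDimensional k S₀ :=
      inferInstanceAs (FiniteDimensional k (S₀.restrictScalars k))
    obtain ⟨T₀, hT₀, ⟨e₀⟩⟩ := exists_iso_simple_submodule htr S₀ hS₀
    haveI := hT₀
    haveI : FiniteDimensional k T₀ :=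
      inferInstanceAs (FiniteDimensional k (T₀.restrictScalars k))
    obtain ⟨S', hS'⟩ := exists_isCompl S₀
    obtain ⟨T', hT'⟩ := exists_isCompl T₀
    haveI : FiniteDimensional k S' :=
      inferInstanceAs (FiniteDimensional k (S'.restrictScalars k))
    haveI : FiniteDimensional k T' :=
      inferInstanceAs (FiniteDimensional k (T'.restrictScalars k))
    have eM : (S₀ × S') ≃ₗ[A] M := Submodule.prodEquivOfIsCompl S₀ S' hS'
    have eN : (T₀ × T') ≃ₗ[A] N := Submodule.prodEquivOfIsCompl T₀ T' hT'
    have hprodM : ∀ a : A, (smulEnd k (M := S₀ × S') a)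
        = (smulEnd k (M := S₀) a).prodMap (smulEnd k (M := S') a) :=
      fun a => LinearMap.ext fun x => rfl
    have hprodN : ∀ a : A, (smulEnd k (M := T₀ × T') a)
        = (smulEnd k (M := T₀) a).prodMap (smulEnd k (M := T') a) :=
      fun a => LinearMap.ext fun x => rfl
    have htr' : ∀ a : A, LinearMap.trace k S' (smulEnd k a)
        = LinearMap.trace k T' (smulEnd k a) := by
      intro a
      have h1 : LinearMap.trace k M (smulEnd k a)
          = LinearMap.trace k S₀ (smulEnd k a) + LinearMap.trace k S' (smulEnd k a) := by
        rw [← trace_smulEnd_eq_of_equiv eM a, hprodM a, LinearMap.trace_prodMap']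
      have h2 : LinearMap.trace k N (smulEnd k a)
          = LinearMap.trace k T₀ (smulEnd k a) + LinearMap.trace k T' (smulEnd k a) := by
        rw [← trace_smulEnd_eq_of_equiv eN a, hprodN a, LinearMap.trace_prodMap']
      have h3 : LinearMap.trace k S₀ (smulEnd k a) = LinearMap.trace k T₀ (smulEnd k a) :=
        trace_smulEnd_eq_of_equiv e₀ a
      have h4 := htr a
      rw [h1, h2, h3] at h4
      exact add_left_cancel h4
    have hrank' : Module.finrank k S' ≤ n := by
      have hM : Module.finrank k M = Module.finrank k S₀ + Module.finrank k S' := by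
        rw [← LinearEquiv.finrank_eq (eM.restrictScalars k), Module.finrank_prod]
      haveI : Nontrivial S₀ := IsSimpleModule.nontrivial A S₀
      have hpos : 0 < Module.finrank k S₀ := Module.finrank_pos
      omega
    obtain ⟨e'⟩ := ih S' T' htr' hrank'
    exact ⟨(eM.symm.trans (e₀.prodCongr e')).trans eN⟩


instance repAsModuleTower {k G V : Type*} [CommSemiring k] [Monoid G]
    [AddCommMonoid V] [Module k V] (ρ : Representation k G V) :
    IsScalarTower k (MonoidAlgebra k G) ρ.asModule := by
  constructor
  intro c a m
  have h : ∀ (b : MonoidAlgebra k G) (x : ρ.asModule), b • x = ρ.asAlgebraHom b x := fun _ _ => rfl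
  rw [h, h, map_smul]
  rfl

/-- Brauer–Nesbitt / Taylor: two semisimple finite-dimensional representations of a group
over an algebraically closed field of characteristic zero with the same trace function
are isomorphic. -/
theorem semisimple_rep_iso_of_trace_eq
    (C : Type*) [Field C] [IsAlgClosed C] [CharZero C]
    (G : Type*) [Group G] (n : ℕ)
    (ρ₁ ρ₂ : Representation C G (Fin n → C))
    (h₁ : IsSemisimpleModule (MonoidAlgebra C G) ρ₁.asModule)
    (h₂ : IsSemisimpleModule (MonoidAlgebra C G) ρ₂.asModule)
    (htr : ∀ g : G, LinearMap.trace C (Fin n → C) (ρ₁ g)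
      = LinearMap.trace C (Fin n → C) (ρ₂ g)) :
    Nonempty (ρ₁.asModule ≃ₗ[MonoidAlgebra C G] ρ₂.asModule) := by
  haveI : FiniteDimensional C ρ₁.asModule := inferInstanceAs (FiniteDimensional C (Fin n → C))
  haveI : FiniteDimensional C ρ₂.asModule := inferInstanceAs (FiniteDimensional C (Fin n → C))
  have hcast : ∀ (ρ : Representation C G (Fin n → C)) (a : MonoidAlgebra C G),
      LinearMap.trace C ρ.asModule (smulEnd C a)
        = LinearMap.trace C (Fin n → C) (ρ.asAlgebraHom a) := fun ρ a => rfl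
  have hext : ∀ a : MonoidAlgebra C G,
      LinearMap.trace C (Fin n → C) (ρ₁.asAlgebraHom a)
        = LinearMap.trace C (Fin n → C) (ρ₂.asAlgebraHom a) := by
    have h : (LinearMap.trace C (Fin n → C)) ∘ₗ (ρ₁.asAlgebraHom).toLinearMap
        = (LinearMap.trace C (Fin n → C)) ∘ₗ (ρ₂.asAlgebraHom).toLinearMap := by
      apply MonoidAlgebra.lhom_ext'
      intro g
      apply LinearMap.ext
      intro c
      simp only [LinearMap.coe_comp, Function.comp_apply, MonoidAlgebra.lsingle_apply,
        AlgHom.toLinearMap_apply]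
      rw [Representation.asAlgebraHom_single, Representation.asAlgebraHom_single,
        map_smul, map_smul, htr g]
    intro a
    exact LinearMap.ext_iff.mp h a
  have key : ∀ a : MonoidAlgebra C G,
      LinearMap.trace C ρ₁.asModule (smulEnd C a)
        = LinearMap.trace C ρ₂.asModule (smulEnd C a) := by
    intro a
    rw [hcast ρ₁ a, hcast ρ₂ a]
    exact hext a
  exact iso_of_trace_eq_aux (Module.finrank C ρ₁.asModule) ρ₁.asModule ρ₂.asModule key le_rfl
end

section
/- Let p be a prime and f ∈ ℤ_p[[X]] a nonzero formal power series. Then the set of x in the maximal ideal of the ring of integers of ℂ_p (i.e., x ∈ ℂ_p with |x| < 1) at which f converges to 0 is finite. -/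
open Filter Topology IsUltrametricDist

section aux
variable {K : Type*} [NormedField K] [IsUltrametricDist K] [CompleteSpace K]

lemma aux_summable (b : ℕ → K) (hb : ∀ n, ‖b n‖ ≤ 1) {x : K} (hx : ‖x‖ < 1) :
    Summable (fun n => b n * x ^ n) := by
  apply NonarchimedeanAddGroup.summable_of_tendsto_cofinite_zero
  rw [Nat.cofinite_eq_atTop, tendsto_zero_iff_norm_tendsto_zero]
  have h0 : Filter.Tendsto (fun n : ℕ => ‖x‖ ^ n) atTop (nhds 0) :=
    tendsto_pow_atTop_nhds_zero_of_lt_one (norm_nonneg x) hx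
  refine squeeze_zero (fun n => norm_nonneg _) (fun n => ?_) h0
  rw [norm_mul, norm_pow]
  exact mul_le_of_le_one_left (by positivity) (hb n)

lemma strassmann : ∀ (N : ℕ) (b : ℕ → K), (∀ n, ‖b n‖ ≤ 1) → ‖b N‖ = 1 →
    {x : K | ‖x‖ < 1 ∧ HasSum (fun n => b n * x ^ n) 0}.Finite := by
  intro N
  induction N with
  | zero =>
    intro b hb hb0
    convert Set.finite_empty
    rw [Set.eq_empty_iff_forall_notMem]
    rintro x ⟨hx, hsum⟩
    have hsummable : Summable (fun n => b n * x ^ n) := aux_summable b hb hx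
    have h0 : (0 : K) = b 0 * x ^ 0 + ∑' n, b (n + 1) * x ^ (n + 1) := by
      rw [← hsum.tsum_eq]; exact Summable.tsum_eq_zero_add hsummable
    have htail : ‖∑' n, b (n + 1) * x ^ (n + 1)‖ ≤ ‖x‖ := by
      apply norm_tsum_le_of_forall_le_of_nonneg (norm_nonneg x)
      intro n
      rw [norm_mul, norm_pow]
      calc ‖b (n+1)‖ * ‖x‖ ^ (n+1) ≤ 1 * ‖x‖ ^ (n+1) :=
            mul_le_mul_of_nonneg_right (hb _) (by positivity)
        _ = ‖x‖ ^ (n+1) := one_mul _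
        _ ≤ ‖x‖ ^ 1 := pow_le_pow_of_le_one (norm_nonneg x) hx.le (by omega)
        _ = ‖x‖ := pow_one _
    have : ‖b 0‖ ≤ ‖x‖ := by
      have hb0eq : b 0 = - ∑' n, b (n + 1) * x ^ (n + 1) :=
        eq_neg_of_add_eq_zero_left (by rw [pow_zero, mul_one] at h0; exact h0.symm)
      rw [hb0eq, norm_neg]; exact htail
    rw [hb0] at this
    exact absurd (lt_of_le_of_lt this hx) (lt_irrefl 1)
  | succ N ih =>
    intro b hb hbN
    rcases Set.eq_empty_or_nonempty
        {x : K | ‖x‖ < 1 ∧ HasSum (fun n => b n * x ^ n) 0} with he | ⟨α, hα, hαsum⟩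
    · rw [he]; exact Set.finite_empty
    -- the divided series
    set b' : ℕ → K := fun i => ∑' j, b (i + 1 + j) * α ^ j with hb'def
    have hsb' : ∀ i, Summable (fun j => b (i + 1 + j) * α ^ j) :=
      fun i => aux_summable (fun j => b (i + 1 + j)) (fun j => hb _) hα
    have h1 : ∀ i, ‖b' i‖ ≤ 1 := by
      intro i
      apply norm_tsum_le_of_forall_le_of_nonneg zero_le_one
      intro j
      rw [norm_mul, norm_pow]
      exact mul_le_one₀ (hb _) (by positivity) (pow_le_one₀ (norm_nonneg _) hα.le)
    have hrec : ∀ i, b' i = b (i + 1) + α * b' (i + 1) := by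
      intro i
      rw [hb'def]
      simp only
      rw [Summable.tsum_eq_zero_add (hsb' i)]
      rw [add_zero, pow_zero, mul_one, ← tsum_mul_left]
      congr 1
      apply tsum_congr
      intro j
      rw [show i + 1 + (j + 1) = i + 1 + 1 + j by omega, pow_succ]
      ring
    have h2 : ‖b' N‖ = 1 := by
      rw [hrec N]
      have hlt : ‖α * b' (N + 1)‖ < ‖b (N + 1)‖ := by
        rw [hbN, norm_mul]
        calc ‖α‖ * ‖b' (N+1)‖ ≤ ‖α‖ * 1 :=
              mul_le_mul_of_nonneg_left (h1 _) (norm_nonneg _)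
          _ = ‖α‖ := mul_one _
          _ < 1 := hα
      rw [norm_add_eq_max_of_norm_ne_norm hlt.ne', max_eq_left hlt.le, hbN]
    -- at α, the shifted sum relates to the original one
    have h3 : α * b' 0 = - b 0 := by
      have h0 : (0 : K) = b 0 * α ^ 0 + ∑' n, b (n + 1) * α ^ (n + 1) := by
        rw [← hαsum.tsum_eq]; exact Summable.tsum_eq_zero_add hαsum.summable
      have h4 : α * b' 0 = ∑' n, b (n + 1) * α ^ (n + 1) := by
        rw [hb'def]
        simp only
        rw [← tsum_mul_left]
        apply tsum_congr
        intro j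
        rw [zero_add, pow_succ]
        ring_nf
      rw [pow_zero, mul_one] at h0
      rw [h4]
      exact eq_neg_of_add_eq_zero_right h0.symm
    have hpartial : ∀ x : K, ∀ n : ℕ,
        (x - α) * (∑ i ∈ Finset.range (n + 1), b' i * x ^ i) =
          (∑ i ∈ Finset.range (n + 1), b i * x ^ i) + b' n * x ^ (n + 1) := by
      intro x n
      induction n with
      | zero =>
        norm_num [Finset.sum_range_one]
        linear_combination -h3
      | succ n ihn =>
        rw [Finset.sum_range_succ (n := n + 1), Finset.sum_range_succ (f := fun i => b i * x ^ i) (n := n + 1),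
          mul_add, ihn]
        linear_combination (x ^ (n + 1)) * hrec n
    have hsubset : {x : K | ‖x‖ < 1 ∧ HasSum (fun n => b n * x ^ n) 0} ⊆
        insert α {x : K | ‖x‖ < 1 ∧ HasSum (fun n => b' n * x ^ n) 0} := by
      rintro x ⟨hx, hxsum⟩
      rcases eq_or_ne x α with hxa | hxa
      · exact Set.mem_insert_iff.2 (Or.inl hxa)
      refine Set.mem_insert_iff.2 (Or.inr ⟨hx, ?_⟩)
      have hg : Summable (fun n => b' n * x ^ n) := aux_summable b' h1 hx
      set S := ∑' n, b' n * x ^ n with hS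
      -- limit of the LHS of hpartial
      have hL : Filter.Tendsto
          (fun n => (x - α) * (∑ i ∈ Finset.range (n + 1), b' i * x ^ i)) atTop
          (nhds ((x - α) * S)) := by
        apply Filter.Tendsto.const_mul
        exact (hg.hasSum.tendsto_sum_nat).comp (tendsto_add_atTop_nat 1)
      -- limit of the RHS
      have hR1 : Filter.Tendsto
          (fun n => ∑ i ∈ Finset.range (n + 1), b i * x ^ i) atTop (nhds 0) :=
        (hxsum.tendsto_sum_nat).comp (tendsto_add_atTop_nat 1)
      have hR2 : Filter.Tendsto (fun n => b' n * x ^ (n + 1)) atTop (nhds 0) := by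
        rw [tendsto_zero_iff_norm_tendsto_zero]
        have h0 : Filter.Tendsto (fun n : ℕ => ‖x‖ ^ (n + 1)) atTop (nhds 0) :=
          ((tendsto_pow_atTop_nhds_zero_of_lt_one (norm_nonneg x) hx).comp
            (tendsto_add_atTop_nat 1))
        refine squeeze_zero (fun n => norm_nonneg _) (fun n => ?_) h0
        rw [norm_mul, norm_pow]
        exact mul_le_of_le_one_left (by positivity) (h1 n)
      have hR : Filter.Tendsto
          (fun n => (∑ i ∈ Finset.range (n + 1), b i * x ^ i) + b' n * x ^ (n + 1)) atTop
          (nhds 0) := by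
        simpa using hR1.add hR2
      have heq : (x - α) * S = 0 :=
        tendsto_nhds_unique (by simpa only [hpartial x] using hL) hR
      have hS0 : S = 0 := by
        rcases mul_eq_zero.mp heq with h | h
        · exact absurd (sub_eq_zero.mp h) hxa
        · exact h
      exact hS0 ▸ hg.hasSum
    exact ((ih b' h1 h2).insert α).subset hsubset

end aux

/-- A nonzero power series with `ℤ_p` coefficients has only finitely many zeros in the open
unit disc of a complete nonarchimedean valued extension (such as `ℂ_p`). -/
theorem finite_zeros_of_padic_power_series
    (p : ℕ) [Fact p.Prime] (f : PowerSeries ℤ_[p]) (hf : f ≠ 0)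
    (K : Type*) [NormedField K] [IsUltrametricDist K] [CompleteSpace K]
    [Algebra ℤ_[p] K]
    (hiso : ∀ z : ℤ_[p], ‖algebraMap ℤ_[p] K z‖ = ‖z‖) :
    {x : K | ‖x‖ < 1 ∧
      HasSum (fun n : ℕ => algebraMap ℤ_[p] K (PowerSeries.coeff n f) * x ^ n) 0}.Finite := by
  classical
  have hex : ∃ n, PowerSeries.coeff n f ≠ 0 := by
    by_contra h
    push_neg at h
    exact hf (PowerSeries.ext fun n => by simpa using h n)
  obtain ⟨n₀, hn₀⟩ := hex
  have hP : ∃ k : ℕ, ∃ n, PowerSeries.coeff n f ≠ 0 ∧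
      ((PowerSeries.coeff n f).valuation) = k := ⟨_, n₀, hn₀, rfl⟩
  obtain ⟨N, hN0, hNk⟩ := Nat.find_spec hP
  have hmax : ∀ m, ‖PowerSeries.coeff m f‖ ≤ ‖PowerSeries.coeff N f‖ := by
    intro m
    by_cases hm : PowerSeries.coeff m f = 0
    · rw [hm, norm_zero]
      exact norm_nonneg _
    · rw [PadicInt.norm_eq_zpow_neg_valuation hm, PadicInt.norm_eq_zpow_neg_valuation hN0]
      apply zpow_le_zpow_right₀
      · exact_mod_cast (Fact.out : p.Prime).one_lt.le
      · have h1 : Nat.find hP ≤ ((PowerSeries.coeff m f).valuation) :=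
          Nat.find_min' hP ⟨m, hm, rfl⟩
        have h2 := Nat.zero_le (PowerSeries.coeff m f).valuation
        have h3 := Nat.zero_le (PowerSeries.coeff N f).valuation
        omega
  set a : ℕ → K := fun n => algebraMap ℤ_[p] K (PowerSeries.coeff n f) with ha
  have haN : a N ≠ 0 := by
    intro h
    apply hN0
    have h' := hiso (PowerSeries.coeff N f)
    rw [show algebraMap ℤ_[p] K (PowerSeries.coeff N f) = a N from rfl, h,
      norm_zero] at h'
    exact norm_eq_zero.mp h'.symm
  have haNnorm : ∀ n, ‖a n‖ ≤ ‖a N‖ := by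
    intro n
    rw [ha]
    simp only
    rw [hiso, hiso]
    exact hmax n
  set c : ℕ → K := fun n => a n / a N with hc
  have hc1 : ∀ n, ‖c n‖ ≤ 1 := by
    intro n
    rw [hc]
    simp only [norm_div]
    exact div_le_one_of_le₀ (haNnorm n) (norm_nonneg _)
  have hcN : ‖c N‖ = 1 := by
    rw [hc]
    simp only [div_self haN, norm_one]
  have hsets : {x : K | ‖x‖ < 1 ∧ HasSum (fun n : ℕ => a n * x ^ n) 0} =
      {x : K | ‖x‖ < 1 ∧ HasSum (fun n : ℕ => c n * x ^ n) 0} := by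
    ext x
    simp only [Set.mem_setOf_eq, and_congr_right_iff]
    intro _
    have key : ∀ n, c n * x ^ n = (a N)⁻¹ * (a n * x ^ n) := by
      intro n
      rw [hc]
      field_simp
    rw [show (fun n : ℕ => c n * x ^ n) = fun n : ℕ => (a N)⁻¹ * (a n * x ^ n) from
      funext key]
    constructor
    · intro h
      have h2 := h.mul_left ((a N)⁻¹)
      rw [mul_zero] at h2
      simpa using h2
    · intro h
      have h2 := h.mul_left (a N)
      rw [mul_zero] at h2
      simpa [← mul_assoc, mul_inv_cancel₀ haN] using h2
  show {x : K | ‖x‖ < 1 ∧ HasSum (fun n : ℕ => a n * x ^ n) 0}.Finite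
  rw [hsets]
  exact strassmann N c hc1 hcN
end
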